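/- arXiv:2110.13537 — 2 statements merged into one kernel-verified Lean document; each statement's English description precedes it below -/
import Mathlib

section
/- Let H be a real Hilbert space, V₀ ⊆ V ⊆ H subspaces, and let a finite family of subspaces V₁,…,V_N of V be given together with linear maps Π_j : V → V_j and Ξ_j : V → V. Suppose that for each v ∈ V we have v = Σ_{j=1}^N Ξ_j(v − Π_j v) + z₀(v) with z₀(v) ∈ V₀, that ‖Σ_{j=1}^N w_j‖² ≤ k₀ Σ_{j=1}^N ‖w_j‖²_j for all w_j in appropriate local norms, that ‖Ξ_j(v − Π_j v)‖²_j ≤ Θ ‖v − Π_j v‖²_j, that ‖v − Π_j v‖_j ≤ ‖v‖_j, and that Σ_{j=1}^N ‖v‖²_j ≤ k₀ ‖v‖². Then inf_{z ∈ V₀} ‖v − z‖² ≤ k₀² Θ ‖v‖² for all v ∈ V. -/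
theorem stmt_3 {H : Type*} [NormedAddCommGroup H] [InnerProductSpace ℝ H]
    (V₀ V : Submodule ℝ H) (hV₀ : V₀ ≤ V) (N : ℕ)
    (Vj : Fin N → Submodule ℝ H) (hVj : ∀ j, Vj j ≤ V)
    (Pj Xi : Fin N → H →ₗ[ℝ] H)
    (hPj : ∀ j, ∀ v ∈ V, Pj j v ∈ Vj j)
    (hXi : ∀ j, ∀ v ∈ V, Xi j v ∈ Vj j)
    (nrm : Fin N → H → ℝ) (k₀ Θ : ℝ) (hk₀ : 0 ≤ k₀) (hΘ : 0 ≤ Θ)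
    (z₀ : H → H) (hz₀ : ∀ v ∈ V, z₀ v ∈ V₀)
    (hdecomp : ∀ v ∈ V, v = (∑ j, Xi j (v - Pj j v)) + z₀ v)
    (hoverlap : ∀ w : Fin N → H, (∀ j, w j ∈ Vj j) →
      ‖∑ j, w j‖ ^ 2 ≤ k₀ * ∑ j, (nrm j (w j)) ^ 2)
    (hspec : ∀ j, ∀ v ∈ V, (nrm j (Xi j (v - Pj j v))) ^ 2 ≤ Θ * (nrm j (v - Pj j v)) ^ 2)
    (hstab : ∀ j, ∀ v ∈ V, nrm j (v - Pj j v) ≤ nrm j v)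
    (hnrm : ∀ j v, 0 ≤ nrm j v)
    (hsum : ∀ v ∈ V, ∑ j, (nrm j v) ^ 2 ≤ k₀ * ‖v‖ ^ 2) :
    ∀ v ∈ V, ⨅ z : V₀, ‖v - (z : H)‖ ^ 2 ≤ k₀ ^ 2 * Θ * ‖v‖ ^ 2 := by
  intro v hv
  have hle : (⨅ z : V₀, ‖v - (z : H)‖ ^ 2) ≤ ‖v - z₀ v‖ ^ 2 := by
    have : Nonempty V₀ := ⟨0⟩
    exact ciInf_le ⟨0, fun x ⟨z, hz⟩ => hz ▸ sq_nonneg _⟩ (⟨z₀ v, hz₀ v hv⟩ : V₀)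
  refine hle.trans ?_
  have hdec : v - z₀ v = ∑ j, Xi j (v - Pj j v) :=
    sub_eq_iff_eq_add.2 (hdecomp v hv)
  rw [hdec]
  have h1 : ‖∑ j, Xi j (v - Pj j v)‖ ^ 2 ≤ k₀ * ∑ j, (nrm j (Xi j (v - Pj j v))) ^ 2 :=
    hoverlap _ (fun j => hXi j _ (V.sub_mem hv (hVj j (hPj j v hv))))
  have h2 : ∑ j, (nrm j (Xi j (v - Pj j v))) ^ 2 ≤ Θ * ∑ j, (nrm j v) ^ 2 := by
    rw [Finset.mul_sum]
    refine Finset.sum_le_sum fun j _ => (hspec j v hv).trans ?_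
    exact mul_le_mul_of_nonneg_left (pow_le_pow_left₀ (hnrm j _) (hstab j v hv) 2) hΘ
  have h3 : ∑ j, (nrm j v) ^ 2 ≤ k₀ * ‖v‖ ^ 2 := hsum v hv
  calc ‖∑ j, Xi j (v - Pj j v)‖ ^ 2 ≤ k₀ * (Θ * ∑ j, (nrm j v) ^ 2) :=
        h1.trans (mul_le_mul_of_nonneg_left h2 hk₀)
    _ ≤ k₀ * (Θ * (k₀ * ‖v‖ ^ 2)) := by
        exact mul_le_mul_of_nonneg_left (mul_le_mul_of_nonneg_left h3 hΘ) hk₀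
    _ = k₀ ^ 2 * Θ * ‖v‖ ^ 2 := by ring
end

section
/- Let ‖·‖₁ and ‖·‖₂ be two norms on ℝⁿ satisfying γ₁·‖x‖₁ ≤ ‖x‖₂ ≤ γ₂·‖x‖₁ for all x, with 0 < γ₁ ≤ γ₂. Suppose two sequences of residuals (r₁ᵐ) and (r₂ᵐ) with common initial residual r⁰ satisfy: r₂ᵐ minimizes ‖·‖₂ over a nested family of affine subspaces containing r₁ᵐ (so that ‖r₂ᵐ‖₂ ≤ ‖r₁ᵐ‖₂ for all m), and ‖r₁ᵐ‖₁ ≤ σᵐ‖r⁰‖₁ for some 0 < σ < 1. Then for any natural number Δm with Δm·log(1/σ) ≥ log(γ₂/γ₁), we have ‖r₂^{m+Δm}‖₂ ≤ σᵐ‖r⁰‖₂ for all m. -/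
theorem stmt_6 (n : ℕ) (N₁ N₂ : (Fin n → ℝ) → ℝ)
    (hN₁ : ∀ x, 0 ≤ N₁ x) (hN₂ : ∀ x, 0 ≤ N₂ x)
    (γ₁ γ₂ : ℝ) (hγ₁ : 0 < γ₁) (hγ : γ₁ ≤ γ₂)
    (hequiv : ∀ x, γ₁ * N₁ x ≤ N₂ x ∧ N₂ x ≤ γ₂ * N₁ x)
    (r₁ r₂ : ℕ → Fin n → ℝ) (r₀ : Fin n → ℝ)
    (hinit₁ : r₁ 0 = r₀) (hinit₂ : r₂ 0 = r₀)
    (hmin : ∀ m, N₂ (r₂ m) ≤ N₂ (r₁ m))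
    (σ : ℝ) (hσ0 : 0 < σ) (hσ1 : σ < 1)
    (hdecay : ∀ m, N₁ (r₁ m) ≤ σ ^ m * N₁ r₀)
    (Δm : ℕ) (hΔm : Real.log (γ₂ / γ₁) ≤ (Δm : ℝ) * Real.log (1 / σ)) :
    ∀ m : ℕ, N₂ (r₂ (m + Δm)) ≤ σ ^ m * N₂ r₀ := by
  have hγ₂ : 0 < γ₂ := lt_of_lt_of_le hγ₁ hγ
  -- key: γ₂ * σ ^ Δm ≤ γ₁
  have hkey : γ₂ * σ ^ Δm ≤ γ₁ := by
    have h1 : Real.log (γ₂ / γ₁) ≤ Real.log ((1 / σ) ^ Δm) := by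
      rwa [Real.log_pow]
    have h2 : γ₂ / γ₁ ≤ (1 / σ) ^ Δm := by
      have := (Real.log_le_log_iff (div_pos hγ₂ hγ₁)
        (pow_pos (by positivity) Δm)).mp h1
      exact this
    rw [div_pow, one_pow] at h2
    have hσp : (0:ℝ) < σ ^ Δm := pow_pos hσ0 Δm
    rw [div_le_div_iff₀ hγ₁ hσp] at h2
    linarith [h2]
  intro m
  have h1 : N₂ (r₂ (m + Δm)) ≤ N₂ (r₁ (m + Δm)) := hmin _
  have h2 : N₂ (r₁ (m + Δm)) ≤ γ₂ * N₁ (r₁ (m + Δm)) := (hequiv _).2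
  have h3 : N₁ (r₁ (m + Δm)) ≤ σ ^ (m + Δm) * N₁ r₀ := hdecay _
  have h4 : γ₁ * N₁ r₀ ≤ N₂ r₀ := (hequiv _).1
  have hN₁r₀ : 0 ≤ N₁ r₀ := hN₁ _
  calc N₂ (r₂ (m + Δm)) ≤ γ₂ * (σ ^ (m + Δm) * N₁ r₀) := by
        refine h1.trans (h2.trans ?_)
        exact mul_le_mul_of_nonneg_left h3 hγ₂.le
    _ = σ ^ m * ((γ₂ * σ ^ Δm) * N₁ r₀) := by rw [pow_add]; ring
    _ ≤ σ ^ m * (γ₁ * N₁ r₀) := by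
        apply mul_le_mul_of_nonneg_left _ (pow_nonneg hσ0.le m)
        exact mul_le_mul_of_nonneg_right hkey hN₁r₀
    _ ≤ σ ^ m * N₂ r₀ := mul_le_mul_of_nonneg_left h4 (pow_nonneg hσ0.le m)
end
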